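/- Fix p > 0 and λ > 1. Let ξ₁, ξ₂, … be i.i.d. exponential(1) random variables with partial sums S_k, and M_λ = sup_{k ≥ 0}(S_k − λk). For each n, let Y₁ < ⋯ < Y_n denote the order statistics of (S₁/S_n, …, S_n/S_n) (distributed as uniform order statistics), and let σ_n be any random variable with values in {1, …, n}, arbitrarily dependent on everything. Then limsup_{n→∞} n^p E[Y_{σ_n}^p] ≤ c_p λ^p limsup_{n→∞} E[σ_n^p] + c_p E[M_λ^p], where c_p = max(2^{p−1}, 1). -/

import Mathlib

open MeasureTheory ProbabilityTheory Filter
open Real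
open scoped ENNReal NNReal Topology

section Helpers

lemma exp_int_mgf {Ω : Type*} [MeasurableSpace Ω] (μ : Measure Ω) [IsProbabilityMeasure μ]
    (X : Ω → ℝ) (hX : Measurable X) (hd : μ.map X = expMeasure 1) {t : ℝ} (ht : t < 1) :
    Integrable (fun ω => rexp (t * X ω)) μ ∧ mgf X μ t = (1 - t)⁻¹ := by
  have hb : 0 < 1 - t := by linarith
  have hfun : ∀ x : ℝ, exponentialPDF 1 x * ENNReal.ofReal (rexp (t * x))
      = Set.indicator (Set.Ici 0) (fun x => ENNReal.ofReal (rexp ((t - 1) * x))) x := by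
    intro x
    rw [exponentialPDF_eq, Set.indicator_apply]
    by_cases hx : x ∈ Set.Ici (0:ℝ)
    · rw [if_pos hx, if_pos (by exact hx), ← ENNReal.ofReal_mul (by positivity)]
      congr 1
      rw [one_mul, one_mul, ← Real.exp_add]
      ring_nf
    · rw [if_neg (by simpa using hx), if_neg hx]
      simp
  have hIntOn : IntegrableOn (fun x => rexp ((t - 1) * x)) (Set.Ioi 0) := by
    have := exp_neg_integrableOn_Ioi 0 hb
    simpa [neg_mul, neg_sub] using this
  have hInt' : ∫ x in Set.Ioi (0:ℝ), rexp ((t - 1) * x) = (1 - t)⁻¹ := by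
    have h2 := integral_comp_mul_left_Ioi (fun x => rexp (-x)) 0 hb
    simp only [mul_zero, integral_exp_neg_Ioi, neg_zero, Real.exp_zero, smul_eq_mul, mul_one] at h2
    have : (fun x => rexp ((t - 1) * x)) = fun x => rexp (-((1 - t) * x)) := by
      funext x; ring_nf
    rw [this]
    simpa [neg_mul] using h2
  have hlin : ∫⁻ x, ENNReal.ofReal (rexp (t * x)) ∂(expMeasure 1)
      = ENNReal.ofReal ((1 - t)⁻¹) := by
    have hmb : Measurable (fun x : ℝ => ENNReal.ofReal (rexp (t * x))) := by
      exact (measurable_const.mul measurable_id').exp.ennreal_ofReal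
    have hpdf : Measurable (gammaPDF 1 1) := (measurable_gammaPDFReal 1 1).ennreal_ofReal
    rw [expMeasure, gammaMeasure, lintegral_withDensity_eq_lintegral_mul _ hpdf hmb]
    calc ∫⁻ x, (gammaPDF 1 1 * fun x => ENNReal.ofReal (rexp (t * x))) x
        = ∫⁻ x, Set.indicator (Set.Ici 0) (fun x => ENNReal.ofReal (rexp ((t - 1) * x))) x := by
          apply lintegral_congr; intro x; exact hfun x
      _ = ∫⁻ x in Set.Ici (0:ℝ), ENNReal.ofReal (rexp ((t - 1) * x)) := by
          rw [lintegral_indicator measurableSet_Ici]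
      _ = ∫⁻ x in Set.Ioi (0:ℝ), ENNReal.ofReal (rexp ((t - 1) * x)) := by
          rw [Measure.restrict_congr_set Ioi_ae_eq_Ici.symm]
      _ = ENNReal.ofReal ((1 - t)⁻¹) := by
          rw [← ofReal_integral_eq_lintegral_ofReal hIntOn
            (Filter.Eventually.of_forall fun x => (Real.exp_pos _).le), hInt']
  have hprob : IsProbabilityMeasure (expMeasure 1) := isProbabilityMeasure_expMeasure one_pos
  have hintE : Integrable (fun x => rexp (t * x)) (expMeasure 1) := by
    refine ⟨(Continuous.aestronglyMeasurable (by continuity)), ?_⟩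
    rw [hasFiniteIntegral_iff_ofReal (Filter.Eventually.of_forall fun x => (Real.exp_pos _).le),
      hlin]
    exact ENNReal.ofReal_lt_top
  have hint : Integrable (fun ω => rexp (t * X ω)) μ := by
    have := (integrable_map_measure (f := X) (g := fun x => rexp (t * x))
      (by rw [hd]; exact hintE.aestronglyMeasurable) hX.aemeasurable).mp (by rwa [hd])
    exact this
  refine ⟨hint, ?_⟩
  have : mgf X μ t = ∫ x, rexp (t * x) ∂(expMeasure 1) := by
    rw [mgf, ← hd, integral_map hX.aemeasurable (Continuous.aestronglyMeasurable (by continuity))]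
  rw [this, integral_eq_lintegral_of_nonneg_ae
    (Filter.Eventually.of_forall fun x => (Real.exp_pos _).le)
    (Continuous.aestronglyMeasurable (by continuity)), hlin,
    ENNReal.toReal_ofReal (by positivity)]

variable {Ω : Type*} [MeasurableSpace Ω] (μ : Measure Ω) [IsProbabilityMeasure μ]
    (ξ : ℕ → Ω → ℝ) (hmeas : ∀ i, Measurable (ξ i))
    (hindep : iIndepFun ξ μ)
    (hdist : ∀ i, μ.map (ξ i) = expMeasure 1)

include hmeas hindep hdist in
lemma mgf_S {t : ℝ} (ht : t < 1) (n : ℕ) :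
    mgf (∑ i ∈ Finset.range n, ξ i) μ t = ((1 - t)⁻¹) ^ n := by
  rw [hindep.mgf_sum hmeas]
  rw [Finset.prod_congr rfl (fun i _ => (exp_int_mgf μ (ξ i) (hmeas i) (hdist i) ht).2)]
  simp

include hmeas hindep hdist in
lemma chernoff_lower {θ : ℝ} (hθ0 : 0 < θ) (hθ1 : θ < 1) :
    ∃ r : ℝ, 0 ≤ r ∧ r < 1 ∧ ∀ n : ℕ,
      μ {ω | ∑ i ∈ Finset.range n, ξ i ω ≤ θ * n} ≤ ENNReal.ofReal (r ^ n) := by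
  set t : ℝ := (1 - θ) / (2 * θ) with htdef
  have ht0 : 0 < t := div_pos (by linarith) (by linarith)
  have htθ : t * θ = (1 - θ) / 2 := by
    rw [htdef, div_mul_eq_mul_div, div_eq_div_iff (by positivity) two_ne_zero]; ring
  have h1mtθ : 0 < 1 - t * θ := by rw [htθ]; linarith
  have h1t : (0:ℝ) < 1 + t := by linarith
  set r : ℝ := rexp (t * θ) * (1 + t)⁻¹ with hrdef
  have hr0 : 0 ≤ r := by positivity
  have hexp : rexp (t * θ) * (1 - t * θ) < 1 := by
    have h1 : -(t * θ) + 1 < rexp (-(t * θ)) := Real.add_one_lt_exp (by nlinarith)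
    have h3 : rexp (t * θ) * rexp (-(t * θ)) = 1 := by rw [← Real.exp_add]; simp
    calc rexp (t * θ) * (1 - t * θ) = rexp (t * θ) * (-(t * θ) + 1) := by ring
      _ < rexp (t * θ) * rexp (-(t * θ)) := by
          exact mul_lt_mul_of_pos_left h1 (Real.exp_pos _)
      _ = 1 := h3
  have hq : 1 ≤ (1 + t) * (1 - t * θ) := by
    have key : (1 + t) * (1 - t * θ) - 1 = (1 - θ)^2 / (4 * θ) := by
      rw [htθ, htdef]; field_simp; ring
    nlinarith [div_nonneg (sq_nonneg (1 - θ)) (by linarith : (0:ℝ) ≤ 4 * θ)]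
  have hr1 : r < 1 := by
    rw [hrdef, mul_inv_lt_iff₀ h1t, one_mul]
    calc rexp (t * θ) < 1 / (1 - t * θ) := by
          rw [lt_div_iff₀ h1mtθ]; exact hexp
      _ ≤ 1 + t := by rw [div_le_iff₀ h1mtθ]; linarith
  refine ⟨r, hr0, hr1, fun n => ?_⟩
  have hint : Integrable (fun ω => rexp (-t * (∑ i ∈ Finset.range n, ξ i) ω)) μ :=
    hindep.integrable_exp_mul_sum hmeas
      (fun i _ => (exp_int_mgf μ (ξ i) (hmeas i) (hdist i) (by linarith)).1)
  have hcher := measure_le_le_exp_mul_mgf (μ := μ) (X := ∑ i ∈ Finset.range n, ξ i)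
    (θ * n) (neg_nonpos.mpr ht0.le) hint
  rw [mgf_S μ ξ hmeas hindep hdist (by linarith)] at hcher
  have hkey : rexp (- -t * (θ * n)) * ((1 - -t)⁻¹) ^ n = r ^ n := by
    rw [hrdef, mul_pow, show - -t * (θ * n) = (n : ℝ) * (t * θ) by ring, Real.exp_nat_mul]
    norm_num
  rw [hkey] at hcher
  have hset : {ω | ∑ i ∈ Finset.range n, ξ i ω ≤ θ * n}
      = {ω | (∑ i ∈ Finset.range n, ξ i) ω ≤ θ * n} := by
    simp [Finset.sum_apply]
  rw [hset, ← ENNReal.ofReal_toReal (measure_ne_top μ _)]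
  exact ENNReal.ofReal_le_ofReal hcher

include hmeas hindep hdist in
lemma chernoff_upper {lam : ℝ} (hlam : 1 < lam) :
    ∃ ρ : ℝ, 0 ≤ ρ ∧ ρ < 1 ∧ ∀ k : ℕ,
      μ {ω | lam * k ≤ ∑ i ∈ Finset.range k, ξ i ω} ≤ ENNReal.ofReal (ρ ^ k) := by
  set s : ℝ := (lam - 1) / (2 * lam) with hsdef
  have hlam0 : (0:ℝ) < lam := by linarith
  have hs0 : 0 < s := div_pos (by linarith) (by linarith)
  have hs1 : s < 1 := by rw [hsdef, div_lt_one (by positivity)]; linarith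
  have hsl : s * lam = (lam - 1) / 2 := by
    rw [hsdef, div_mul_eq_mul_div, div_eq_div_iff (by positivity) two_ne_zero]; ring
  have h1s : (0:ℝ) < 1 - s := by linarith
  have h1sl : (0:ℝ) < 1 + s * lam := by nlinarith
  set ρ : ℝ := rexp (-(s * lam)) * (1 - s)⁻¹ with hρdef
  have hρ0 : 0 ≤ ρ := by positivity
  have hq : 1 ≤ (1 - s) * (1 + s * lam) := by
    have key : (1 - s) * (1 + s * lam) - 1 = (lam - 1)^2 / (4 * lam) := by
      rw [hsl, hsdef]; field_simp; ring
    nlinarith [div_nonneg (sq_nonneg (lam - 1)) (by linarith : (0:ℝ) ≤ 4 * lam)]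
  have hρ1 : ρ < 1 := by
    rw [hρdef, mul_inv_lt_iff₀ h1s, one_mul]
    have h1 : s * lam + 1 < rexp (s * lam) := Real.add_one_lt_exp (by positivity)
    calc rexp (-(s * lam)) = (rexp (s * lam))⁻¹ := Real.exp_neg _
      _ < (1 + s * lam)⁻¹ := by
          apply inv_strictAnti₀ h1sl; linarith
      _ ≤ 1 - s := by rw [← one_div, div_le_iff₀ h1sl]; linarith
  refine ⟨ρ, hρ0, hρ1, fun k => ?_⟩
  have hint : Integrable (fun ω => rexp (s * (∑ i ∈ Finset.range k, ξ i) ω)) μ :=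
    hindep.integrable_exp_mul_sum hmeas
      (fun i _ => (exp_int_mgf μ (ξ i) (hmeas i) (hdist i) hs1).1)
  have hcher := measure_ge_le_exp_mul_mgf (μ := μ) (X := ∑ i ∈ Finset.range k, ξ i)
    (lam * k) hs0.le hint
  rw [mgf_S μ ξ hmeas hindep hdist hs1] at hcher
  have hkey : rexp (-s * (lam * k)) * ((1 - s)⁻¹) ^ k = ρ ^ k := by
    rw [hρdef, mul_pow, show -s * (lam * k) = (k : ℝ) * (-(s * lam)) by ring, Real.exp_nat_mul]
  rw [hkey] at hcher
  have hset : {ω | lam * k ≤ ∑ i ∈ Finset.range k, ξ i ω}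
      = {ω | lam * k ≤ (∑ i ∈ Finset.range k, ξ i) ω} := by
    simp [Finset.sum_apply]
  rw [hset, ← ENNReal.ofReal_toReal (measure_ne_top μ _)]
  exact ENNReal.ofReal_le_ofReal hcher

include hmeas hdist in
lemma ae_pos : ∀ᵐ ω ∂μ, ∀ i, 0 < ξ i ω := by
  rw [ae_all_iff]
  intro i
  rw [ae_iff]
  have hset : {ω | ¬ 0 < ξ i ω} = ξ i ⁻¹' (Set.Iic 0) := by
    ext ω; simp [not_lt]
  rw [hset, ← Measure.map_apply (hmeas i) measurableSet_Iic, hdist i, expMeasure, gammaMeasure,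
    withDensity_apply _ measurableSet_Iic]
  have := lintegral_exponentialPDF_eq_antiDeriv (r := 1) one_pos 0
  simp at this; exact this

include hmeas hindep hdist in
lemma ae_bddAbove {lam : ℝ} (hlam : 1 < lam) :
    ∀ᵐ ω ∂μ, BddAbove (Set.range fun k : ℕ =>
      (∑ i ∈ Finset.range k, ξ i ω) - lam * k) := by
  obtain ⟨ρ, hρ0, hρ1, hbound⟩ := chernoff_upper μ ξ hmeas hindep hdist hlam
  set s : ℕ → Set Ω := fun k => {ω | lam * k ≤ ∑ i ∈ Finset.range k, ξ i ω} with hs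
  have htsum : (∑' k, μ (s k)) ≠ ∞ := by
    refine ne_top_of_le_ne_top ?_ (ENNReal.tsum_le_tsum (fun k => hbound k))
    have : ∀ k : ℕ, ENNReal.ofReal (ρ ^ k) = (ENNReal.ofReal ρ) ^ k := fun k =>
      ENNReal.ofReal_pow hρ0 k
    rw [tsum_congr this, ENNReal.tsum_geometric]
    exact ENNReal.inv_ne_top.mpr (tsub_pos_of_lt (ENNReal.ofReal_lt_one.mpr hρ1)).ne'
  filter_upwards [ae_eventually_notMem htsum] with ω hω
  obtain ⟨K, hK⟩ := eventually_atTop.mp hω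
  set f : ℕ → ℝ := fun k => (∑ i ∈ Finset.range k, ξ i ω) - lam * k with hf
  have hne : (Finset.range (K + 1)).Nonempty := Finset.nonempty_range_iff.mpr (Nat.succ_ne_zero K)
  refine ⟨max 0 ((Finset.range (K + 1)).sup' hne f), ?_⟩
  rintro x ⟨k, rfl⟩
  by_cases hk : k ≤ K
  · exact le_max_of_le_right (Finset.le_sup' f (Finset.mem_range.mpr (by omega)))
  · have hmem : ω ∉ s k := hK k (by omega)
    have hlt : f k < 0 := by
      simp only [hs, Set.mem_setOf_eq, not_le] at hmem
      simp only [hf]; linarith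
    exact le_max_of_le_left hlt.le

lemma cp_rpow_bound {p : ℝ} (hp : 0 < p) (a b : ℝ≥0∞) :
    (a + b) ^ p ≤ ENNReal.ofReal (max ((2:ℝ) ^ (p - 1)) 1) * (a ^ p + b ^ p) := by
  rcases le_or_gt 1 p with h1p | hp1
  · calc (a + b) ^ p ≤ (2:ℝ≥0∞) ^ (p - 1) * (a ^ p + b ^ p) :=
        ENNReal.rpow_add_le_mul_rpow_add_rpow a b h1p
      _ ≤ ENNReal.ofReal (max ((2:ℝ) ^ (p - 1)) 1) * (a ^ p + b ^ p) := by
        apply mul_le_mul_left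
        have h2 : (2:ℝ≥0∞) ^ (p - 1) = ENNReal.ofReal ((2:ℝ) ^ (p - 1)) := by
          rw [← ENNReal.ofReal_rpow_of_pos two_pos]
          norm_num
        rw [h2]
        exact ENNReal.ofReal_le_ofReal (le_max_left _ _)
  · calc (a + b) ^ p ≤ a ^ p + b ^ p := ENNReal.rpow_add_le_add_rpow a b hp.le hp1.le
      _ = 1 * (a ^ p + b ^ p) := (one_mul _).symm
      _ ≤ ENNReal.ofReal (max ((2:ℝ) ^ (p - 1)) 1) * (a ^ p + b ^ p) := by
        apply mul_le_mul_left
        rw [show (1:ℝ≥0∞) = ENNReal.ofReal 1 by simp]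
        exact ENNReal.ofReal_le_ofReal (le_max_right _ _)

end Helpers

theorem main_core {Ω : Type*} [MeasurableSpace Ω] (μ : Measure Ω) [IsProbabilityMeasure μ]
    (p lam : ℝ) (hp : 0 < p) (hlam : 1 < lam)
    (S : ℕ → Ω → ℝ) (hSmeas : ∀ n, Measurable (S n))
    (hae : ∀ᵐ ω ∂μ, (∀ j k : ℕ, j ≤ k → S j ω ≤ S k ω) ∧ (∀ n : ℕ, 1 ≤ n → 0 < S n ω) ∧
      (∀ k : ℕ, 0 ≤ S k ω) ∧ BddAbove (Set.range fun k : ℕ => S k ω - lam * k))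
    (hchern : ∀ θ : ℝ, 0 < θ → θ < 1 → ∃ r : ℝ, 0 ≤ r ∧ r < 1 ∧ ∀ n : ℕ,
      μ {ω | S n ω ≤ θ * n} ≤ ENNReal.ofReal (r ^ n))
    (σ : ℕ → Ω → ℕ) (hσmeas : ∀ n, Measurable (σ n))
    (hσrange : ∀ n : ℕ, 1 ≤ n → ∀ ω, σ n ω ∈ Finset.Icc 1 n) :
    atTop.limsup (fun n : ℕ => (n : ENNReal) ^ p *
        ∫⁻ ω, ENNReal.ofReal ((S (σ n ω) ω / S n ω) ^ p) ∂μ) ≤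
      ENNReal.ofReal (max ((2 : ℝ) ^ (p - 1)) 1 * lam ^ p) *
          atTop.limsup (fun n : ℕ => ∫⁻ ω, ENNReal.ofReal ((σ n ω : ℝ) ^ p) ∂μ)
        + ENNReal.ofReal (max ((2 : ℝ) ^ (p - 1)) 1) *
          ∫⁻ ω, ENNReal.ofReal ((⨆ k : ℕ, (S k ω - lam * k)) ^ p) ∂μ := by
  set cp : ℝ := max ((2:ℝ) ^ (p - 1)) 1 with hcp
  have hcp1 : 1 ≤ cp := le_max_right _ _
  have hcp0 : 0 < cp := lt_of_lt_of_le one_pos hcp1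
  have hlam0 : (0:ℝ) < lam := by linarith
  have hlamp : 0 < lam ^ p := Real.rpow_pos_of_pos hlam0 p
  set M : Ω → ℝ := fun ω => ⨆ k : ℕ, (S k ω - lam * k) with hM
  set I : ℕ → ℝ≥0∞ := fun n => ∫⁻ ω, ENNReal.ofReal ((σ n ω : ℝ) ^ p) ∂μ with hI
  set EM : ℝ≥0∞ := ∫⁻ ω, ENNReal.ofReal (M ω ^ p) ∂μ with hEM
  set L : ℝ≥0∞ := atTop.limsup I with hL
  set LHS : ℕ → ℝ≥0∞ := fun n => (n : ENNReal) ^ p *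
      ∫⁻ ω, ENNReal.ofReal ((S (σ n ω) ω / S n ω) ^ p) ∂μ with hLHS
  have hcpl0 : 0 < cp * lam ^ p := by positivity
  by_cases hLtop : L = ⊤
  · rw [hLtop, ENNReal.mul_top (by simp [hcpl0]), top_add]
    exact le_top
  by_cases hEMtop : EM = ⊤
  · rw [hEMtop, ENNReal.mul_top (by simp [hcp0]), add_top]
    exact le_top
  -- the main estimate
  refine ENNReal.le_of_forall_pos_le_add fun δ hδ hR => ?_
  set R : ℝ≥0∞ := ENNReal.ofReal (cp * lam ^ p) * L + ENNReal.ofReal cp * EM with hRdef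
  have hδ2 : (0:ℝ≥0∞) < (δ:ℝ≥0∞)/2 :=
    ENNReal.div_pos (by exact_mod_cast hδ.ne') ENNReal.ofNat_ne_top
  -- choose ε
  have htend : Tendsto (fun e : ℝ => ENNReal.ofReal ((1+e)^p) * R) (𝓝[>] 0) (𝓝 R) := by
    have h1 : Tendsto (fun e : ℝ => (1+e)^p) (𝓝 0) (𝓝 1) := by
      have hc : Continuous fun e : ℝ => (1+e)^p :=
        (continuous_const.add continuous_id).rpow_const (fun x => Or.inr hp.le)
      have := hc.tendsto 0
      simpa using this
    have h2 : Tendsto (fun e : ℝ => ENNReal.ofReal ((1+e)^p)) (𝓝 0) (𝓝 1) := by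
      have := (ENNReal.continuous_ofReal.tendsto 1).comp h1
      simp at this; exact this
    have h2' : Tendsto (fun e : ℝ => ENNReal.ofReal ((1+e)^p)) (𝓝[>] (0:ℝ)) (𝓝 1) :=
      h2.mono_left nhdsWithin_le_nhds
    have h3 := ENNReal.Tendsto.mul_const h2' (Or.inr hR.ne)
    simpa using h3
  have hlt : R < R + (δ:ℝ≥0∞)/2 := ENNReal.lt_add_right hR.ne hδ2.ne'
  obtain ⟨ε, hεR, hε0⟩ := ((htend.eventually_lt_const hlt).and self_mem_nhdsWithin).exists
  have h1ε : (0:ℝ) < 1 + ε := by linarith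
  set θ : ℝ := (1+ε)⁻¹ with hθdef
  have hθ0 : 0 < θ := by positivity
  have hθ1 : θ < 1 := by
    rw [hθdef]
    exact inv_lt_one_of_one_lt₀ (by linarith)
  obtain ⟨r, hr0, hr1, hchernr⟩ := hchern θ hθ0 hθ1
  set A : ℕ → Set Ω := fun n => {ω | S n ω ≤ θ * n} with hA
  have hAmeas : ∀ n, MeasurableSet (A n) := fun n =>
    measurableSet_le (hSmeas n) measurable_const
  have hMmeas : Measurable M := Measurable.iSup (fun k => (hSmeas k).sub measurable_const)
  set c1 : ℝ≥0∞ := ENNReal.ofReal ((1+ε)^p * (cp * lam^p)) with hc1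
  set c2 : ℝ≥0∞ := ENNReal.ofReal ((1+ε)^p * cp) with hc2
  -- pointwise bound
  have hptwise : ∀ n : ℕ, 1 ≤ n → ∀ ω : Ω,
      (∀ j k : ℕ, j ≤ k → S j ω ≤ S k ω) → (∀ m : ℕ, 1 ≤ m → 0 < S m ω) →
      (∀ k : ℕ, 0 ≤ S k ω) → BddAbove (Set.range fun k : ℕ => S k ω - lam * k) →
      (n : ENNReal) ^ p * ENNReal.ofReal ((S (σ n ω) ω / S n ω) ^ p) ≤
        c1 * ENNReal.ofReal ((σ n ω : ℝ)^p) + c2 * ENNReal.ofReal (M ω ^ p)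
          + (A n).indicator (fun _ => (n : ENNReal)^p) ω := by
    intro n hn ω hmono hpos hnn hbdd
    have hSpos : 0 < S n ω := hpos n hn
    set q : ℝ := S (σ n ω) ω / S n ω with hq
    have hq0 : 0 ≤ q := div_nonneg (hnn _) (hnn n)
    have hn0 : (0:ℝ) ≤ (n:ℝ) := Nat.cast_nonneg n
    have hLHSeq : (n : ENNReal) ^ p * ENNReal.ofReal (q ^ p)
        = (ENNReal.ofReal ((n:ℝ) * q)) ^ p := by
      rw [← ENNReal.ofReal_rpow_of_nonneg hq0 hp.le,
        ← ENNReal.mul_rpow_of_nonneg _ _ hp.le,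
        show ((n:ℕ) : ℝ≥0∞) = ENNReal.ofReal ((n:ℕ):ℝ) from (ENNReal.ofReal_natCast n).symm,
        ← ENNReal.ofReal_mul hn0]
    rw [hLHSeq]
    by_cases hω : ω ∈ A n
    · have hσle : σ n ω ≤ n := (Finset.mem_Icc.mp (hσrange n hn ω)).2
      have hq1 : q ≤ 1 := (div_le_one hSpos).mpr (hmono _ _ hσle)
      have hkey : (ENNReal.ofReal ((n:ℝ) * q)) ^ p ≤
          (A n).indicator (fun _ => (n : ENNReal)^p) ω := by
        rw [Set.indicator_of_mem hω]
        apply ENNReal.rpow_le_rpow _ hp.le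
        calc ENNReal.ofReal ((n:ℝ) * q) ≤ ENNReal.ofReal (n:ℝ) :=
            ENNReal.ofReal_le_ofReal (by nlinarith)
          _ = (n : ℝ≥0∞) := ENNReal.ofReal_natCast n
      exact le_trans hkey (self_le_add_left _ _)
    · have hθn : θ * n < S n ω := by
        have : ¬ (S n ω ≤ θ * n) := hω
        linarith [not_le.mp this]
      have hM0 : 0 ≤ M ω := by
        have h0 := le_ciSup hbdd 0
        simp only [Nat.cast_zero, mul_zero, sub_zero] at h0
        exact le_trans (hnn 0) h0
      have hSσ : S (σ n ω) ω ≤ lam * σ n ω + M ω := by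
        have h0 := le_ciSup hbdd (σ n ω)
        simp only [hM] at *
        linarith
      have hσ0 : (0:ℝ) ≤ (σ n ω : ℝ) := Nat.cast_nonneg _
      have hnpos : (0:ℝ) < (n:ℝ) := by exact_mod_cast hn
      have hθnpos : 0 < θ * n := by positivity
      have hnq : (n:ℝ) * q ≤ (1+ε) * (lam * σ n ω) + (1+ε) * M ω := by
        have h1 : q ≤ S (σ n ω) ω / (θ * n) :=
          div_le_div_of_nonneg_left (hnn _) hθnpos hθn.le
        calc (n:ℝ) * q ≤ (n:ℝ) * (S (σ n ω) ω / (θ * n)) :=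
            mul_le_mul_of_nonneg_left h1 hn0
          _ = (1+ε) * S (σ n ω) ω := by
              rw [hθdef]; field_simp
          _ ≤ (1+ε) * (lam * σ n ω + M ω) :=
            mul_le_mul_of_nonneg_left hSσ (by positivity)
          _ = (1+ε) * (lam * σ n ω) + (1+ε) * M ω := by ring
      have step1 : ENNReal.ofReal ((n:ℝ) * q) ≤
          ENNReal.ofReal ((1+ε) * (lam * σ n ω)) + ENNReal.ofReal ((1+ε) * M ω) := by
        rw [← ENNReal.ofReal_add (by positivity) (mul_nonneg (by positivity) hM0)]
        exact ENNReal.ofReal_le_ofReal hnq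
      have step2 : (ENNReal.ofReal ((n:ℝ) * q)) ^ p ≤ ENNReal.ofReal cp *
          ((ENNReal.ofReal ((1+ε) * (lam * σ n ω))) ^ p
            + (ENNReal.ofReal ((1+ε) * M ω)) ^ p) :=
        le_trans (ENNReal.rpow_le_rpow step1 hp.le) (cp_rpow_bound hp _ _)
      have e1 : (ENNReal.ofReal ((1+ε) * (lam * σ n ω))) ^ p
          = ENNReal.ofReal ((1+ε)^p * lam^p) * ENNReal.ofReal ((σ n ω : ℝ)^p) := by
        rw [ENNReal.ofReal_rpow_of_nonneg (mul_nonneg (by positivity)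
          (mul_nonneg hlam0.le hσ0)) hp.le, ← ENNReal.ofReal_mul (by positivity)]
        congr 1
        rw [show (1+ε) * (lam * (σ n ω : ℝ)) = ((1+ε) * lam) * (σ n ω : ℝ) by ring,
          Real.mul_rpow (by positivity) hσ0, Real.mul_rpow (by positivity) hlam0.le]
      have e2 : (ENNReal.ofReal ((1+ε) * M ω)) ^ p
          = ENNReal.ofReal ((1+ε)^p) * ENNReal.ofReal (M ω ^ p) := by
        rw [ENNReal.ofReal_rpow_of_nonneg (mul_nonneg (by positivity) hM0) hp.le,
          ← ENNReal.ofReal_mul (by positivity)]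
        congr 1
        rw [Real.mul_rpow (by positivity) hM0]
      have step3 : ENNReal.ofReal cp *
          ((ENNReal.ofReal ((1+ε) * (lam * σ n ω))) ^ p
            + (ENNReal.ofReal ((1+ε) * M ω)) ^ p)
          = c1 * ENNReal.ofReal ((σ n ω : ℝ)^p) + c2 * ENNReal.ofReal (M ω ^ p) := by
        rw [e1, e2, mul_add, hc1, hc2, ← mul_assoc, ← mul_assoc,
          ← ENNReal.ofReal_mul hcp0.le, ← ENNReal.ofReal_mul hcp0.le]
        congr 3 <;> ring
      exact le_trans step2 (step3.le.trans le_self_add)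
  -- integral bound per n
  have hc1ne : c1 ≠ ⊤ := ENNReal.ofReal_ne_top
  have hc2ne : c2 ≠ ⊤ := ENNReal.ofReal_ne_top
  have hnpne : ∀ n : ℕ, ((n : ℝ≥0∞) ^ p) ≠ ⊤ := fun n =>
    ENNReal.rpow_ne_top_of_nonneg hp.le (ENNReal.natCast_ne_top n)
  have hg2meas : Measurable fun ω => c2 * ENNReal.ofReal (M ω ^ p) :=
    measurable_const.mul
      (((Real.continuous_rpow_const hp.le).measurable.comp hMmeas).ennreal_ofReal)
  have hIneq : ∀ n : ℕ, 1 ≤ n → LHS n ≤ c1 * I n + c2 * EM +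
      (n : ℝ≥0∞) ^ p * ENNReal.ofReal (r ^ n) := by
    intro n hn
    have hstep : LHS n
        = ∫⁻ ω, (n : ENNReal) ^ p * ENNReal.ofReal ((S (σ n ω) ω / S n ω) ^ p) ∂μ :=
      (lintegral_const_mul' _ _ (hnpne n)).symm
    rw [hstep]
    have hmono2 : ∫⁻ ω, (n : ENNReal) ^ p * ENNReal.ofReal ((S (σ n ω) ω / S n ω) ^ p) ∂μ ≤
        ∫⁻ ω, (c1 * ENNReal.ofReal ((σ n ω : ℝ) ^ p) + c2 * ENNReal.ofReal (M ω ^ p)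
          + (A n).indicator (fun _ => (n : ENNReal) ^ p) ω) ∂μ := by
      apply lintegral_mono_ae
      filter_upwards [hae] with ω hω
      exact hptwise n hn ω hω.1 hω.2.1 hω.2.2.1 hω.2.2.2
    refine le_trans hmono2 ?_
    rw [lintegral_add_right _ (measurable_const.indicator (hAmeas n)),
        lintegral_add_right _ hg2meas,
        lintegral_const_mul' _ _ hc1ne, lintegral_const_mul' _ _ hc2ne,
        lintegral_indicator_const (hAmeas n)]
    exact add_le_add (le_refl _) (mul_le_mul_right (hchernr n) _)
  -- the error term tends to zero
  have heqb : ∀ n : ℕ, (n : ℝ≥0∞) ^ p * ENNReal.ofReal (r ^ n)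
      = ENNReal.ofReal ((n : ℝ) ^ p * r ^ n) := by
    intro n
    rw [← ENNReal.ofReal_natCast n, ENNReal.ofReal_rpow_of_nonneg (Nat.cast_nonneg n) hp.le,
      ← ENNReal.ofReal_mul (by positivity)]
  have hreal : Tendsto (fun n : ℕ => (n : ℝ) ^ p * r ^ n) atTop (𝓝 0) := by
    have hk0 : Tendsto (fun n : ℕ => (n : ℝ) ^ (⌈p⌉₊ : ℕ) * r ^ n) atTop (𝓝 0) :=
      tendsto_pow_const_mul_const_pow_of_abs_lt_one ⌈p⌉₊ (by rwa [abs_of_nonneg hr0])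
    refine tendsto_of_tendsto_of_tendsto_of_le_of_le' tendsto_const_nhds hk0 ?_ ?_
    · exact Filter.Eventually.of_forall fun n => by positivity
    · filter_upwards [eventually_ge_atTop 1] with n hn
      apply mul_le_mul_of_nonneg_right _ (pow_nonneg hr0 n)
      rw [← Real.rpow_natCast (n : ℝ) ⌈p⌉₊]
      exact Real.rpow_le_rpow_of_exponent_le (by exact_mod_cast hn) (Nat.le_ceil p)
  have hbtend : Tendsto (fun n : ℕ => (n : ℝ≥0∞) ^ p * ENNReal.ofReal (r ^ n)) atTop (𝓝 0) := by
    simp only [heqb]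
    have := ENNReal.tendsto_ofReal hreal
    simpa using this
  have hbev : ∀ᶠ (n : ℕ) in atTop, (n : ℝ≥0∞) ^ p * ENNReal.ofReal (r ^ n) ≤ (δ : ℝ≥0∞) / 2 :=
    (hbtend.eventually_lt_const hδ2).mono fun n h => h.le
  have hev : ∀ᶠ (n : ℕ) in atTop, LHS n ≤ c1 * I n + (c2 * EM + (δ : ℝ≥0∞) / 2) := by
    filter_upwards [eventually_ge_atTop 1, hbev] with n hn hb
    calc LHS n ≤ c1 * I n + c2 * EM + (n : ℝ≥0∞) ^ p * ENNReal.ofReal (r ^ n) := hIneq n hn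
      _ ≤ c1 * I n + c2 * EM + (δ : ℝ≥0∞) / 2 := add_le_add (le_refl _) hb
      _ = c1 * I n + (c2 * EM + (δ : ℝ≥0∞) / 2) := by rw [add_assoc]
  have hlim1 : atTop.limsup LHS ≤
      atTop.limsup (fun n => c1 * I n + (c2 * EM + (δ : ℝ≥0∞) / 2)) :=
    limsup_le_limsup hev
  have hlim2 : atTop.limsup (fun n => c1 * I n + (c2 * EM + (δ : ℝ≥0∞) / 2))
      = c1 * L + (c2 * EM + (δ : ℝ≥0∞) / 2) := by
    rw [limsup_add_const atTop (fun n => c1 * I n) _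
      (isBoundedUnder_of ⟨⊤, fun _ => le_top⟩)
      (isCoboundedUnder_le_of_eventually_le atTop (x := 0)
        (Filter.Eventually.of_forall fun _ => zero_le)),
      ENNReal.limsup_const_mul_of_ne_top hc1ne]
  have hc1L : c1 * L + c2 * EM ≤ R + (δ : ℝ≥0∞) / 2 := by
    have he1 : c1 = ENNReal.ofReal ((1 + ε) ^ p) * ENNReal.ofReal (cp * lam ^ p) := by
      rw [hc1, ← ENNReal.ofReal_mul (by positivity)]
    have he2 : c2 = ENNReal.ofReal ((1 + ε) ^ p) * ENNReal.ofReal cp := by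
      rw [hc2, ← ENNReal.ofReal_mul (by positivity)]
    calc c1 * L + c2 * EM = ENNReal.ofReal ((1 + ε) ^ p) * R := by
          rw [he1, he2, hRdef, mul_add, mul_assoc, mul_assoc]
      _ ≤ R + (δ : ℝ≥0∞) / 2 := hεR.le
  calc atTop.limsup LHS ≤ c1 * L + (c2 * EM + (δ : ℝ≥0∞) / 2) := hlim1.trans hlim2.le
    _ = (c1 * L + c2 * EM) + (δ : ℝ≥0∞) / 2 := by rw [← add_assoc]
    _ ≤ (R + (δ : ℝ≥0∞) / 2) + (δ : ℝ≥0∞) / 2 := add_le_add_left hc1L _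
    _ = R + (δ : ℝ≥0∞) := by rw [add_assoc, ENNReal.add_halves]


/-- For i.i.d. `Exp(1)` variables with partial sums `S_k`, `λ > 1`,
`M_λ = sup_k (S_k - λ k)`, and `{1,…,n}`-valued random variables `σ_n` (arbitrarily
dependent), with `Y_k = S_k/S_n`:
`limsup_n n^p E[Y_{σ_n}^p] ≤ c_p λ^p limsup_n E[σ_n^p] + c_p E[M_λ^p]`,
where `c_p = max (2^(p-1)) 1`. -/
theorem limsup_moment_selected_orderStat_le
    {Ω : Type*} [MeasurableSpace Ω] (μ : Measure Ω) [IsProbabilityMeasure μ]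
    (p lam : ℝ) (hp : 0 < p) (hlam : 1 < lam)
    (ξ : ℕ → Ω → ℝ) (hmeas : ∀ i, Measurable (ξ i))
    (hindep : iIndepFun ξ μ)
    (hdist : ∀ i, μ.map (ξ i) = expMeasure 1)
    (σ : ℕ → Ω → ℕ) (hσmeas : ∀ n, Measurable (σ n))
    (hσrange : ∀ n : ℕ, 1 ≤ n → ∀ ω, σ n ω ∈ Finset.Icc 1 n) :
    atTop.limsup (fun n : ℕ => (n : ENNReal) ^ p *
        ∫⁻ ω, ENNReal.ofReal
          (((∑ i ∈ Finset.range (σ n ω), ξ i ω) / (∑ i ∈ Finset.range n, ξ i ω)) ^ p) ∂μ) ≤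
      ENNReal.ofReal (max ((2 : ℝ) ^ (p - 1)) 1 * lam ^ p) *
          atTop.limsup (fun n : ℕ => ∫⁻ ω, ENNReal.ofReal ((σ n ω : ℝ) ^ p) ∂μ)
        + ENNReal.ofReal (max ((2 : ℝ) ^ (p - 1)) 1) *
          ∫⁻ ω, ENNReal.ofReal
            ((⨆ k : ℕ, ((∑ i ∈ Finset.range k, ξ i ω) - lam * k)) ^ p) ∂μ := by
  have hSmeas : ∀ n : ℕ, Measurable (fun ω => ∑ i ∈ Finset.range n, ξ i ω) := fun n =>
    Finset.measurable_sum _ (fun i _ => hmeas i)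
  have hae : ∀ᵐ ω ∂μ,
      (∀ j k : ℕ, j ≤ k → (∑ i ∈ Finset.range j, ξ i ω) ≤ ∑ i ∈ Finset.range k, ξ i ω) ∧
      (∀ n : ℕ, 1 ≤ n → 0 < ∑ i ∈ Finset.range n, ξ i ω) ∧
      (∀ k : ℕ, 0 ≤ ∑ i ∈ Finset.range k, ξ i ω) ∧
      BddAbove (Set.range fun k : ℕ => (∑ i ∈ Finset.range k, ξ i ω) - lam * k) := by
    filter_upwards [ae_pos μ ξ hmeas hdist, ae_bddAbove μ ξ hmeas hindep hdist hlam]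
      with ω h1 h2
    refine ⟨fun j k hjk => Finset.sum_le_sum_of_subset_of_nonneg
      (Finset.range_subset_range.mpr hjk) (fun i _ _ => (h1 i).le), fun n hn => ?_,
      fun k => Finset.sum_nonneg fun i _ => (h1 i).le, h2⟩
    exact lt_of_lt_of_le (h1 0)
      (Finset.single_le_sum (f := fun i => ξ i ω) (fun i _ => (h1 i).le)
        (Finset.mem_range.mpr hn))
  exact main_core μ p lam hp hlam (fun k ω => ∑ i ∈ Finset.range k, ξ i ω) hSmeas hae
    (fun θ h0 h1 => chernoff_lower μ ξ hmeas hindep hdist h0 h1) σ hσmeas hσrange
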